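/- Let M* be a maximum matching in G and M₁ an ε'-approximately maximal matching in G. Partition M* into M*₀, M*₁, M*₂ according to the number (0, 1, or 2) of endpoints matched by M₁. Then |M*₀| ≤ ε'·μ(G), hence |M*₁| + |M*₂| ≥ (1 − ε')·μ(G), and |M₁| = |M*₂| + (1/2)|M*₁| + (number of M₁-edges with no endpoint in V(M*) counted appropriately) ≥ |M*₂| + (1/2)|M*₁|. -/

import Mathlib

variable {V : Type*}

/-- A matching of `G`: a finset of edges of `G` that are pairwise vertex-disjoint. -/
def IsMatching (G : SimpleGraph V) (M : Finset (Sym2 V)) : Prop :=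
  (∀ e ∈ M, e ∈ G.edgeSet) ∧
    ∀ e ∈ M, ∀ f ∈ M, e ≠ f → ∀ v : V, v ∈ e → v ∉ f

/-- A vertex is matched by `M` if it belongs to some edge of `M`. -/
def Matched (M : Finset (Sym2 V)) (v : V) : Prop := ∃ e ∈ M, v ∈ e

/-- A maximal matching: every edge of `G` has a matched endpoint. -/
def IsMaximalMatching (G : SimpleGraph V) (M : Finset (Sym2 V)) : Prop :=
  IsMatching G M ∧ ∀ e ∈ G.edgeSet, ∃ v, v ∈ e ∧ Matched M v

/-- μ(G): the maximum matching size of `G`. -/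
noncomputable def matchNum (G : SimpleGraph V) : ℕ :=
  sSup {n | ∃ M : Finset (Sym2 V), IsMatching G M ∧ M.card = n}

/-- The subgraph of `G` induced by the vertex set `S` (on the same vertex type). -/
def restrictVerts (G : SimpleGraph V) (S : Set V) : SimpleGraph V where
  Adj u v := G.Adj u v ∧ u ∈ S ∧ v ∈ S
  symm := ⟨fun u v h => ⟨G.symm.symm _ _ h.1, h.2.2, h.2.1⟩⟩
  loopless := ⟨fun u h => G.loopless.irrefl u h.1⟩

/-- `M` is an ε-approximately maximal matching of `G`: it is maximal in a subgraph of `G`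
obtained by deleting at most `ε * μ(G)` vertices. -/
def IsAMM (G : SimpleGraph V) (ε : ℝ) (M : Finset (Sym2 V)) : Prop :=
  IsMatching G M ∧ ∃ D : Finset V, (D.card : ℝ) ≤ ε * matchNum G ∧
    IsMaximalMatching (restrictVerts G ((↑D : Set V)ᶜ)) M

open Classical in
/-- The finset of vertices of an edge. -/
noncomputable def edgeVerts [Fintype V] (e : Sym2 V) : Finset V :=
  Finset.univ.filter (fun v => v ∈ e)

lemma mem_edgeVerts [Fintype V] {e : Sym2 V} {v : V} : v ∈ edgeVerts e ↔ v ∈ e := by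
  simp [edgeVerts]

lemma edgeVerts_mk [Fintype V] [DecidableEq V] (a b : V) :
    edgeVerts s(a, b) = {a, b} := by
  ext v; simp [mem_edgeVerts, Sym2.mem_iff]

lemma edgeVerts_card_le [Fintype V] [DecidableEq V] (e : Sym2 V) :
    (edgeVerts e).card ≤ 2 := by
  induction e using Sym2.inductionOn with
  | hf a b => rw [edgeVerts_mk]; exact (Finset.card_insert_le _ _).trans (by simp)

lemma edgeVerts_card_eq [Fintype V] [DecidableEq V] {G : SimpleGraph V} {e : Sym2 V}
    (he : e ∈ G.edgeSet) : (edgeVerts e).card = 2 := by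
  induction e using Sym2.inductionOn with
  | hf a b =>
    have hab : a ≠ b := ((SimpleGraph.mem_edgeSet G).mp he).ne
    rw [edgeVerts_mk, Finset.card_insert_of_notMem (by simp [hab]), Finset.card_singleton]

theorem amm_partition_counts [Fintype V] [DecidableEq V]
    (G : SimpleGraph V) (ε' : ℝ)
    (Mstar : Finset (Sym2 V)) (hMstar : IsMatching G Mstar)
    (hmax : Mstar.card = matchNum G)
    (M₁ : Finset (Sym2 V)) (hM₁ : IsAMM G ε' M₁)
    (M0 M1s M2s : Finset (Sym2 V))
    (hM0 : ∀ e : Sym2 V, e ∈ M0 ↔ e ∈ Mstar ∧ ∀ v ∈ e, ¬ Matched M₁ v)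
    (hM1 : ∀ e : Sym2 V, e ∈ M1s ↔
      e ∈ Mstar ∧ (∃ v ∈ e, Matched M₁ v) ∧ (∃ v ∈ e, ¬ Matched M₁ v))
    (hM2 : ∀ e : Sym2 V, e ∈ M2s ↔ e ∈ Mstar ∧ ∀ v ∈ e, Matched M₁ v) :
    (M0.card : ℝ) ≤ ε' * matchNum G ∧
    (1 - ε') * matchNum G ≤ (M1s.card : ℝ) + (M2s.card : ℝ) ∧
    (M2s.card : ℝ) + (1/2) * (M1s.card : ℝ) ≤ (M₁.card : ℝ) := by
  classical
  obtain ⟨hM₁m, D, hD, hMM⟩ := hM₁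
  -- disjointness of edgeVerts for distinct Mstar edges
  have hdisj : ∀ e ∈ Mstar, ∀ f ∈ Mstar, e ≠ f → Disjoint (edgeVerts e) (edgeVerts f) := by
    intro e he f hf hef
    rw [Finset.disjoint_left]
    intro v hv hvf
    exact hMstar.2 e he f hf hef v (mem_edgeVerts.mp hv) (mem_edgeVerts.mp hvf)
  -- Part 1
  have h1 : (M0.card : ℝ) ≤ ε' * matchNum G := by
    have hsub : M0.biUnion (fun e => edgeVerts e ∩ D) ⊆ D := by
      intro v hv
      simp only [Finset.mem_biUnion, Finset.mem_inter] at hv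
      obtain ⟨e, _, _, hvD⟩ := hv
      exact hvD
    have hcard : M0.card ≤ (M0.biUnion (fun e => edgeVerts e ∩ D)).card := by
      rw [Finset.card_biUnion]
      · calc M0.card = ∑ _e ∈ M0, 1 := by simp
          _ ≤ _ := Finset.sum_le_sum (by
            intro e he
            rw [hM0] at he
            obtain ⟨heM, hunm⟩ := he
            have heG : e ∈ G.edgeSet := hMstar.1 e heM
            -- some endpoint of e is in D
            induction e using Sym2.inductionOn with
            | hf a b =>
              have hab : G.Adj a b := (SimpleGraph.mem_edgeSet G).mp heG
              have : a ∈ D ∨ b ∈ D := by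
                by_contra hcon
                push_neg at hcon
                have : s(a, b) ∈ (restrictVerts G ((↑D : Set V)ᶜ)).edgeSet := by
                  exact (SimpleGraph.mem_edgeSet _).mpr ⟨hab, by simpa using hcon.1, by simpa using hcon.2⟩
                obtain ⟨v, hv, hvm⟩ := hMM.2 _ this
                exact hunm v hv hvm
              rcases this with h | h
              · refine Finset.card_pos.mpr ⟨a, ?_⟩
                simp [mem_edgeVerts, h]
              · refine Finset.card_pos.mpr ⟨b, ?_⟩
                simp [mem_edgeVerts, h])
      · intro e he f hf hef
        have he' : e ∈ Mstar := ((hM0 e).mp he).1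
        have hf' : f ∈ Mstar := ((hM0 f).mp hf).1
        exact (hdisj e he' f hf' hef).mono Finset.inter_subset_left Finset.inter_subset_left
    have : M0.card ≤ D.card := hcard.trans (Finset.card_le_card hsub)
    calc (M0.card : ℝ) ≤ D.card := by exact_mod_cast this
      _ ≤ ε' * matchNum G := hD
  refine ⟨h1, ?_, ?_⟩
  -- Part 2
  · have hpart : M0.card + M1s.card + M2s.card = Mstar.card := by
      have hd01 : Disjoint M0 M1s := by
        rw [Finset.disjoint_left]; intro e h0 h1
        obtain ⟨v, hv, hvm⟩ := ((hM1 e).mp h1).2.1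
        exact ((hM0 e).mp h0).2 v hv hvm
      have hd02 : Disjoint M0 M2s := by
        rw [Finset.disjoint_left]; intro e h0 h2
        obtain ⟨⟨heM, hall⟩⟩ := And.intro ((hM2 e).mp h2) True.intro
        induction e using Sym2.inductionOn with
        | hf a b => exact ((hM0 _).mp h0).2 a (by simp) (hall a (by simp))
      have hd12 : Disjoint M1s M2s := by
        rw [Finset.disjoint_left]; intro e h1 h2
        obtain ⟨v, hv, hvm⟩ := ((hM1 e).mp h1).2.2
        exact hvm (((hM2 e).mp h2).2 v hv)
      have hunion : M0 ∪ M1s ∪ M2s = Mstar := by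
        ext e
        simp only [Finset.mem_union, hM0, hM1, hM2]
        constructor
        · rintro ((h | h) | h) <;> exact h.1
        · intro he
          by_cases hall : ∀ v ∈ e, Matched M₁ v
          · exact Or.inr ⟨he, hall⟩
          · push_neg at hall
            by_cases hnone : ∀ v ∈ e, ¬ Matched M₁ v
            · exact Or.inl (Or.inl ⟨he, hnone⟩)
            · push_neg at hnone
              exact Or.inl (Or.inr ⟨he, hnone, hall⟩)
      rw [← hunion, Finset.card_union_of_disjoint
        (by rw [Finset.disjoint_union_left]; exact ⟨hd02, hd12⟩),
        Finset.card_union_of_disjoint hd01]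
    have : (M0.card : ℝ) + M1s.card + M2s.card = matchNum G := by
      rw [← hmax]; exact_mod_cast hpart
    linarith
  -- Part 3
  · have hd12 : Disjoint M1s M2s := by
      rw [Finset.disjoint_left]; intro e h1 h2
      obtain ⟨v, hv, hvm⟩ := ((hM1 e).mp h1).2.2
      exact hvm (((hM2 e).mp h2).2 v hv)
    set T : Finset V := Finset.univ.filter (fun v => Matched M₁ v) with hT
    have hTcard : T.card ≤ 2 * M₁.card := by
      have hsub : T ⊆ M₁.biUnion edgeVerts := by
        intro v hv
        simp only [hT, Finset.mem_filter] at hv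
        obtain ⟨e, he, hve⟩ := hv.2
        exact Finset.mem_biUnion.mpr ⟨e, he, mem_edgeVerts.mpr hve⟩
      calc T.card ≤ (M₁.biUnion edgeVerts).card := Finset.card_le_card hsub
        _ ≤ ∑ e ∈ M₁, (edgeVerts e).card := Finset.card_biUnion_le
        _ ≤ ∑ _e ∈ M₁, 2 := Finset.sum_le_sum (fun e _ => edgeVerts_card_le e)
        _ = 2 * M₁.card := by rw [Finset.sum_const, smul_eq_mul, mul_comm]
    have hlow : 2 * M2s.card + M1s.card ≤ T.card := by
      have hsub : (M1s ∪ M2s).biUnion (fun e => edgeVerts e ∩ T) ⊆ T := by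
        intro v hv
        simp only [Finset.mem_biUnion, Finset.mem_inter] at hv
        obtain ⟨e, _, _, hvT⟩ := hv
        exact hvT
      have hmem : ∀ e ∈ M1s ∪ M2s, e ∈ Mstar := by
        intro e he
        rcases Finset.mem_union.mp he with h | h
        · exact ((hM1 e).mp h).1
        · exact ((hM2 e).mp h).1
      have hcard : ((M1s ∪ M2s).biUnion (fun e => edgeVerts e ∩ T)).card
          = ∑ e ∈ M1s ∪ M2s, (edgeVerts e ∩ T).card := by
        apply Finset.card_biUnion
        intro e he f hf hef
        exact (hdisj e (hmem e he) f (hmem f hf) hef).mono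
          Finset.inter_subset_left Finset.inter_subset_left
      have hsum : ∑ e ∈ M1s ∪ M2s, (edgeVerts e ∩ T).card
          ≥ 2 * M2s.card + M1s.card := by
        rw [Finset.sum_union hd12]
        have h2s : ∑ e ∈ M2s, (edgeVerts e ∩ T).card ≥ 2 * M2s.card := by
          calc ∑ e ∈ M2s, (edgeVerts e ∩ T).card ≥ ∑ _e ∈ M2s, 2 :=
              Finset.sum_le_sum (by
                intro e he
                obtain ⟨heM, hall⟩ := (hM2 e).mp he
                have : edgeVerts e ∩ T = edgeVerts e := by
                  apply Finset.inter_eq_left.mpr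
                  intro v hv
                  simp only [hT, Finset.mem_filter]
                  exact ⟨Finset.mem_univ v, hall v (mem_edgeVerts.mp hv)⟩
                rw [this, edgeVerts_card_eq (hMstar.1 e heM)]
              )
            _ = 2 * M2s.card := by rw [Finset.sum_const, smul_eq_mul, mul_comm]
        have h1s : ∑ e ∈ M1s, (edgeVerts e ∩ T).card ≥ M1s.card := by
          calc ∑ e ∈ M1s, (edgeVerts e ∩ T).card ≥ ∑ _e ∈ M1s, 1 :=
              Finset.sum_le_sum (by
                intro e he
                obtain ⟨heM, ⟨v, hv, hvm⟩, _⟩ := (hM1 e).mp he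
                refine Finset.card_pos.mpr ⟨v, ?_⟩
                simp only [Finset.mem_inter, hT, Finset.mem_filter]
                exact ⟨mem_edgeVerts.mpr hv, Finset.mem_univ v, hvm⟩)
            _ = M1s.card := by simp
        omega
      calc 2 * M2s.card + M1s.card ≤ ∑ e ∈ M1s ∪ M2s, (edgeVerts e ∩ T).card := hsum
        _ = _ := hcard.symm
        _ ≤ T.card := Finset.card_le_card hsub
    have : 2 * M2s.card + M1s.card ≤ 2 * M₁.card := hlow.trans hTcard
    have hr : (2 * M2s.card + M1s.card : ℝ) ≤ 2 * M₁.card := by exact_mod_cast this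
    linarith
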